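/- Consider a full binary tree over a word w of length n = 2^k, where the node at level i and index t corresponds to the block w[(t-1)·n/2^i + 1 .. t·n/2^i]. Prune the tree at nodes whose blocks are previous fragments or single fresh letters; call a pair of sibling leaves a cherry. Then the block induced by the parent of any cherry is not a previous fragment, and hence the number of cherries is at most z, the number of phrases in the LZ77 factorization of w. -/

import Mathlib

variable {α : Type*}

/-- The subword of `w` of length `len` starting at 0-indexed position `i`. -/
def subword (w : List α) (i len : ℕ) : List α := (w.drop i).take len

/-- `u` occurs in `w` at 0-indexed position `i`. -/
def OccursAt (u w : List α) (i : ℕ) : Prop :=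
  i + u.length ≤ w.length ∧ subword w i u.length = u

/-- `p` is a period of `w`: `w[i] = w[i+p]` whenever both positions are in range. -/
def HasPeriod (w : List α) (p : ℕ) : Prop :=
  0 < p ∧ ∀ i : ℕ, i + p < w.length → w[i]? = w[i + p]?

/-- `per w`: the length of the shortest period of `w`. -/
noncomputable def minPeriod (w : List α) : ℕ := sInf {p | HasPeriod w p}

/-- The fragment of `w` of length `len` starting at 0-indexed position `i`
is a previous fragment: the corresponding word occurs earlier in `w`. -/
def PrevFrag (w : List α) (i len : ℕ) : Prop :=
  0 < len ∧ i + len ≤ w.length ∧ ∃ i' < i, OccursAt (subword w i len) w i'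

/-- The letter at position `i` of `w` does not occur earlier in `w`. -/
def FreshLetter (w : List α) (i : ℕ) : Prop :=
  i < w.length ∧ ∀ i' < i, w[i']? ≠ w[i]?

/-- A phrase is a previous fragment or a single letter not occurring before. -/
def IsPhrase (w : List α) (i len : ℕ) : Prop :=
  PrevFrag w i len ∨ (len = 1 ∧ FreshLetter w i)

/-- `b 0 = 0 < b 1 < ... < b a = |w|` are the boundaries of a factorization of `w`
into `a` pieces; piece `k` starts at `b k` and has length `b (k+1) - b k`. -/
def IsFactorization (w : List α) (a : ℕ) (b : ℕ → ℕ) : Prop :=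
  b 0 = 0 ∧ b a = w.length ∧ ∀ k < a, b k < b (k + 1)

/-- A factorization of `w` into `a` phrases. -/
def IsPhraseFactorization (w : List α) (a : ℕ) (b : ℕ → ℕ) : Prop :=
  IsFactorization w a b ∧ ∀ k < a, IsPhrase w (b k) (b (k + 1) - b k)

/-- The LZ77 (greedy) factorization of `w` into `z` phrases: each phrase is the
longest possible phrase starting at its position. -/
def IsLZ77 (w : List α) (z : ℕ) (b : ℕ → ℕ) : Prop :=
  IsPhraseFactorization w z b ∧
    ∀ k < z, ∀ len, b (k + 1) - b k < len → b k + len ≤ w.length →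
      ¬ IsPhrase w (b k) len

/-- The node at level `i`, index `t` (0-indexed, `t < 2^i`) of the binary tree over a
word of length `2^k` is a leaf iff its block (of length `2^(k-i)`) is a phrase. -/
def TreeLeaf (w : List α) (k i t : ℕ) : Prop :=
  IsPhrase w (t * 2 ^ (k - i)) (2 ^ (k - i))

/-- A node is alive (explored) iff none of its proper ancestors below the root is a leaf. -/
def TreeAlive (w : List α) (k i t : ℕ) : Prop :=
  ∀ i', 1 ≤ i' → i' < i → ¬ TreeLeaf w k i' (t / 2 ^ (i - i'))

/-- A cherry at the node `(i, t)`: both its children are alive leaves. -/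
def TreeCherry (w : List α) (k i t : ℕ) : Prop :=
  TreeAlive w k (i + 1) (2 * t) ∧
    TreeLeaf w k (i + 1) (2 * t) ∧ TreeLeaf w k (i + 1) (2 * t + 1)

lemma subword_length (w : List α) (i len : ℕ) (h : i + len ≤ w.length) :
    (subword w i len).length = len := by
  simp [subword]; omega

lemma subword_subword (w : List α) (s d L L2 : ℕ) (h : d + L2 ≤ L) :
    ((subword w s L).drop d).take L2 = subword w (s + d) L2 := by
  simp only [subword, List.drop_take, List.take_take, List.drop_drop]
  rw [min_eq_left (by omega)]

lemma prevFrag_sub {w : List α} {s L s2 L2 : ℕ} (h : PrevFrag w s L)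
    (h1 : s ≤ s2) (h2 : s2 + L2 ≤ s + L) (h3 : 0 < L2) : PrevFrag w s2 L2 := by
  obtain ⟨hL, hsn, i', hi', hocc⟩ := h
  have hlen : (subword w s L).length = L := subword_length w s L hsn
  obtain ⟨ho1, ho2⟩ := hocc
  rw [hlen] at ho2
  have heq : subword w i' L = subword w s L := ho2
  refine ⟨h3, by omega, i' + (s2 - s), by omega, ?_, ?_⟩
  · rw [subword_length w s2 L2 (by omega)]; omega
  · rw [subword_length w s2 L2 (by omega)]
    calc subword w (i' + (s2 - s)) L2
        = ((subword w i' L).drop (s2 - s)).take L2 :=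
          (subword_subword w i' (s2 - s) L L2 (by omega)).symm
      _ = ((subword w s L).drop (s2 - s)).take L2 := by rw [heq]
      _ = subword w (s + (s2 - s)) L2 := subword_subword w s (s2 - s) L L2 (by omega)
      _ = subword w s2 L2 := by congr 1; omega

lemma exists_phrase_end {w : List α} {z : ℕ} {f : ℕ → ℕ}
    (hpf : IsPhraseFactorization w z f) {s L : ℕ} (hL : 0 < L)
    (hsl : s + L ≤ w.length) (hnp : ¬ PrevFrag w s L) :
    ∃ j, j < z ∧ s < f (j + 1) ∧ f (j + 1) ≤ s + L := by
  classical
  obtain ⟨⟨h0, hz, hmono⟩, hph⟩ := hpf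
  have hwpos : 0 < w.length := by omega
  have hzpos : 0 < z := by
    rcases Nat.eq_zero_or_pos z with h | h
    · subst h; omega
    · exact h
  have hex : ∃ j, s < f (j + 1) := ⟨z - 1, by
    rw [show z - 1 + 1 = z from by omega, hz]; omega⟩
  set j := Nat.find hex with hj
  have hjs : s < f (j + 1) := Nat.find_spec hex
  have hjlt : j < z := by
    have : j ≤ z - 1 := Nat.find_min' hex (by
      rw [show z - 1 + 1 = z from by omega, hz]; omega)
    omega
  have hfj : f j ≤ s := by
    rcases Nat.eq_zero_or_pos j with h | h
    · rw [h, h0]; omega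
    · have hm := Nat.find_min hex (show j - 1 < j from by omega)
      push_neg at hm
      rw [show j - 1 + 1 = j from by omega] at hm
      exact hm
  by_cases hendj : f (j + 1) ≤ s + L
  · exact ⟨j, hjlt, hjs, hendj⟩
  push_neg at hendj
  exfalso
  have hlt := hmono j hjlt
  rcases hph j hjlt with hprev | ⟨h1, _⟩
  · exact hnp (prevFrag_sub hprev hfj (by omega) hL)
  · omega

lemma cherry_nest {w : List α} {k i t i' t' : ℕ} (hle : i ≤ i')
    (hc : TreeCherry w k i t) (hc' : TreeCherry w k i' t')
    {x : ℕ} (hx1 : t * 2 ^ (k - i) ≤ x) (hx2 : x < t * 2 ^ (k - i) + 2 ^ (k - i))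
    (hx1' : t' * 2 ^ (k - i') ≤ x) (hx2' : x < t' * 2 ^ (k - i') + 2 ^ (k - i'))
    (hik : i + 1 ≤ k) (hik' : i' + 1 ≤ k) :
    i = i' ∧ t = t' := by
  have hdt : x / 2 ^ (k - i) = t :=
    Nat.div_eq_of_lt_le hx1 (by rw [add_mul, one_mul]; omega)
  have hdt' : x / 2 ^ (k - i') = t' :=
    Nat.div_eq_of_lt_le hx1' (by rw [add_mul, one_mul]; omega)
  have hsplit : 2 ^ (k - i) = 2 ^ (k - i') * 2 ^ (i' - i) := by
    rw [← pow_add]; congr 1; omega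
  have hdiv : t' / 2 ^ (i' - i) = t := by
    rw [← hdt', ← hdt, Nat.div_div_eq_div_mul, ← hsplit]
  rcases Nat.eq_or_lt_of_le hle with heq | hlt
  · subst heq
    refine ⟨rfl, ?_⟩
    simpa using hdiv.symm
  · exfalso
    have halive : ¬ TreeLeaf w k (i + 1) ((2 * t') / 2 ^ (i' + 1 - (i + 1))) :=
      hc'.1 (i + 1) (by omega) (by omega)
    have e1 : i' + 1 - (i + 1) = i' - i := by omega
    set m := i' - i with hm
    have hm1 : 1 ≤ m := by omega
    have hpm : (2:ℕ) ^ m = 2 * 2 ^ (m - 1) := by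
      rw [← pow_succ']; congr 1; omega
    have e2 : (2 * t') / 2 ^ m = t' / 2 ^ (m - 1) := by
      rw [hpm]
      exact Nat.mul_div_mul_left t' (2 ^ (m - 1)) (by norm_num)
    rw [e1, e2] at halive
    set s := t' / 2 ^ (m - 1) with hs
    have hpm2 : 2 ^ (m - 1) * 2 = (2:ℕ) ^ m := by
      rw [← pow_succ]; congr 1; omega
    have hs2 : s / 2 = t := by
      rw [hs, Nat.div_div_eq_div_mul, hpm2]
      exact hdiv
    have : s = 2 * t ∨ s = 2 * t + 1 := by omega
    rcases this with h | h
    · exact halive (h ▸ hc.2.1)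
    · exact halive (h ▸ hc.2.2)

/-- The block induced by (the parent node of) a cherry is never a previous fragment,
and the number of cherries is at most `z`, the number of LZ77 phrases. -/
theorem statement_13 (w : List α) (k z : ℕ) (f : ℕ → ℕ)
    (hn : w.length = 2 ^ k) (hlz : IsLZ77 w z f) :
    (∀ i t, i + 1 ≤ k → t < 2 ^ i → TreeCherry w k i t →
      ¬ PrevFrag w (t * 2 ^ (k - i)) (2 ^ (k - i))) ∧
    ({p : ℕ × ℕ | p.1 + 1 ≤ k ∧ p.2 < 2 ^ p.1 ∧ TreeCherry w k p.1 p.2}.ncard ≤ z) := by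
  classical
  have hpow : ∀ i : ℕ, 0 < 2 ^ i := fun i => pow_pos (by norm_num) i
  have part1 : ∀ i t, i + 1 ≤ k → t < 2 ^ i → TreeCherry w k i t →
      ¬ PrevFrag w (t * 2 ^ (k - i)) (2 ^ (k - i)) := by
    intro i t hik ht hc
    rcases Nat.eq_zero_or_pos i with hi0 | hip
    · subst hi0
      have ht0 : t = 0 := by simpa using ht
      subst ht0
      rintro ⟨-, -, i', hi', -⟩
      simp at hi'
    · intro hp
      have halive : ¬ TreeLeaf w k i ((2 * t) / 2 ^ (i + 1 - i)) :=
        hc.1 i hip (by omega)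
      have e : (2 * t) / 2 ^ (i + 1 - i) = t := by
        rw [show i + 1 - i = 1 from by omega, pow_one]
        omega
      rw [e] at halive
      exact halive (Or.inl hp)
  refine ⟨part1, ?_⟩
  set S := {p : ℕ × ℕ | p.1 + 1 ≤ k ∧ p.2 < 2 ^ p.1 ∧ TreeCherry w k p.1 p.2} with hS
  have hendS : ∀ p ∈ S, ∃ j, j < z ∧ p.2 * 2 ^ (k - p.1) < f (j + 1) ∧
      f (j + 1) ≤ p.2 * 2 ^ (k - p.1) + 2 ^ (k - p.1) := by
    rintro ⟨i, t⟩ ⟨hik, ht, hc⟩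
    have hnp := part1 i t hik ht hc
    have hsl : t * 2 ^ (k - i) + 2 ^ (k - i) ≤ w.length := by
      rw [hn]
      calc t * 2 ^ (k - i) + 2 ^ (k - i) = (t + 1) * 2 ^ (k - i) := by ring
        _ ≤ 2 ^ i * 2 ^ (k - i) := Nat.mul_le_mul_right _ ht
        _ = 2 ^ k := by rw [← pow_add]; congr 1; omega
    exact exists_phrase_end hlz.1 (hpow _) hsl hnp
  let g : ℕ × ℕ → ℕ := fun p =>
    if h : ∃ j, j < z ∧ p.2 * 2 ^ (k - p.1) < f (j + 1) ∧
        f (j + 1) ≤ p.2 * 2 ^ (k - p.1) + 2 ^ (k - p.1) then h.choose else 0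
  have hgspec : ∀ p ∈ S, g p < z ∧ p.2 * 2 ^ (k - p.1) < f (g p + 1) ∧
      f (g p + 1) ≤ p.2 * 2 ^ (k - p.1) + 2 ^ (k - p.1) := by
    intro p hp
    have h := hendS p hp
    simp only [g, dif_pos h]
    exact h.choose_spec
  have hinj : Set.InjOn g S := by
    rintro ⟨i, t⟩ hp ⟨i', t'⟩ hq hgeq
    obtain ⟨hik, ht, hc⟩ := hp
    obtain ⟨hik', ht', hc'⟩ := hq
    obtain ⟨h1, h2, h3⟩ := hgspec _ ⟨hik, ht, hc⟩
    obtain ⟨h1', h2', h3'⟩ := hgspec _ ⟨hik', ht', hc'⟩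
    dsimp only at hik ht hc hik' ht' hc' h1 h2 h3 h1' h2' h3'
    rw [hgeq] at h2 h3
    set x := f (g (i', t') + 1) - 1 with hx
    have hb1 : t * 2 ^ (k - i) ≤ x := by omega
    have hb2 : x < t * 2 ^ (k - i) + 2 ^ (k - i) := by omega
    have hb1' : t' * 2 ^ (k - i') ≤ x := by omega
    have hb2' : x < t' * 2 ^ (k - i') + 2 ^ (k - i') := by omega
    rcases le_total i i' with hle | hle
    · obtain ⟨e1, e2⟩ := cherry_nest hle hc hc' hb1 hb2 hb1' hb2' hik hik'
      simp [Prod.ext_iff, e1, e2]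
    · obtain ⟨e1, e2⟩ := cherry_nest hle hc' hc hb1' hb2' hb1 hb2 hik' hik
      simp [Prod.ext_iff, e1.symm, e2.symm]

  calc S.ncard = (g '' S).ncard := (Set.ncard_image_of_injOn hinj).symm
    _ ≤ (Set.Iio z).ncard := by
        refine Set.ncard_le_ncard ?_ (Set.finite_Iio z)
        rintro _ ⟨p, hp, rfl⟩
        exact (hgspec p hp).1
    _ = z := by rw [← Finset.coe_Iio, Set.ncard_coe_finset, Nat.card_Iio]
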